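/- There is a constant C = C(g,h) > 0, depending only on the integers g ≥ h ≥ 2, such that for every positive integer n and every C_h[g]-set A ⊆ [n] (with the C_h[g] condition taken in the group ℤ), one has |A| ≤ (g-1)^{1/h} · n^{1 - 1/h} + C · n^{1/2 - 1/(2h)}. -/

import Mathlib

set_option maxHeartbeats 1000000

/-- `A ⊆ Γ` is a `C_h[g]`-set. -/
def IsChSet {Γ : Type*} [AddCommGroup Γ] (h g : ℕ) (A : Set Γ) : Prop :=
  ∀ X : Finset Γ, X.card = h → ∀ K : Finset Γ, K.card = g →
    ∃ k ∈ K, ¬ (∀ x ∈ X, x + k ∈ A)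

lemma translate_count (g h : ℕ) (A : Finset ℤ)
    (hA2 : IsChSet h g (A : Set ℤ)) (Z : Finset ℤ) (hZ : Z.card = h) (S : Finset ℤ) :
    (S.filter (fun k => ∀ x ∈ Z, x + k ∈ A)).card ≤ g - 1 := by
  by_contra hcon
  push_neg at hcon
  have hg : g ≤ (S.filter (fun k => ∀ x ∈ Z, x + k ∈ A)).card := by omega
  obtain ⟨K, hKsub, hKcard⟩ := Finset.exists_subset_card_eq hg
  obtain ⟨k, hkK, hk⟩ := hA2 Z hZ K hKcard
  have := hKsub hkK
  rw [Finset.mem_filter] at this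
  exact hk (fun x hx => this.2 x hx)

/-- window `W j` -/
noncomputable def Wnd (u : ℕ) (j : ℕ) : Finset ℤ := Finset.Icc ((j : ℤ) + 2 - u) ((j : ℤ) + 1)

-- L3 : sum of binomials over windows
lemma window_choose_sum (g h n u : ℕ) (hg : 2 ≤ g) (hu : 0 < u) (A : Finset ℤ)
    (hA1 : (A : Set ℤ) ⊆ Set.Icc 1 (n : ℤ)) (hA2 : IsChSet h g (A : Set ℤ)) (hZc : 2 ≤ h) :
    ∑ j ∈ Finset.range (n + u - 1), ((A ∩ Wnd u j).card.choose h) ≤ (g - 1) * u.choose h := by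
  classical
  -- rewrite LHS as card of a sigma finset
  have lhs_eq : ∑ j ∈ Finset.range (n + u - 1), ((A ∩ Wnd u j).card.choose h)
      = ((Finset.range (n + u - 1)).sigma (fun j => (A ∩ Wnd u j).powersetCard h)).card := by
    rw [Finset.card_sigma]
    simp [Finset.card_powersetCard]
  -- target sigma
  set P : Finset (Finset ℤ) := (Finset.Icc (0 : ℤ) ((u : ℤ) - 1)).powersetCard h with hP
  set T : Finset ℤ → Finset ℤ :=
    fun Z => (Finset.Icc ((2 : ℤ) - u) (n : ℤ)).filter (fun k => ∀ x ∈ Z, x + k ∈ A) with hT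
  have rhs_ge : (P.sigma T).card ≤ (g - 1) * u.choose h := by
    rw [Finset.card_sigma]
    have : ∀ Z ∈ P, (T Z).card ≤ g - 1 := by
      intro Z hZ
      rw [hP, Finset.mem_powersetCard] at hZ
      exact translate_count g h A hA2 Z hZ.2 _
    calc ∑ Z ∈ P, (T Z).card ≤ ∑ Z ∈ P, (g - 1) := Finset.sum_le_sum this
      _ = P.card * (g - 1) := by rw [Finset.sum_const, smul_eq_mul]
      _ = (g - 1) * u.choose h := by
          rw [hP, Finset.card_powersetCard, Int.card_Icc]
          have huu : ((u : ℤ) - 1 + 1 - 0).toNat = u := by omega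
          rw [huu, mul_comm]
  rw [lhs_eq]
  refine le_trans (Finset.card_le_card_of_injOn
    (fun p => ⟨p.2.image (fun x => x - ((p.1 : ℤ) + 2 - u)), (p.1 : ℤ) + 2 - u⟩) ?_ ?_) rhs_ge
  · rintro ⟨j, Y⟩ hp
    rw [Finset.mem_coe, Finset.mem_sigma] at hp
    obtain ⟨hj, hY⟩ := hp
    rw [Finset.mem_powersetCard] at hY
    rw [Finset.mem_range] at hj
    replace hj : j < n + u - 1 := hj
    obtain ⟨hYsub, hYcard⟩ := hY
    replace hYsub : Y ⊆ A ∩ Wnd u j := hYsub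
    replace hYcard : Y.card = h := hYcard
    rw [Finset.mem_coe, Finset.mem_sigma]
    constructor
    · show Y.image (fun x => x - ((j : ℤ) + 2 - u)) ∈ P
      rw [hP, Finset.mem_powersetCard]
      constructor
      · intro z hz
        rw [Finset.mem_image] at hz
        obtain ⟨y, hy, rfl⟩ := hz
        have := hYsub hy
        rw [Finset.mem_inter] at this
        have h2 := this.2
        rw [Wnd, Finset.mem_Icc] at h2
        rw [Finset.mem_Icc]
        omega
      · rw [Finset.card_image_of_injective _ (sub_left_injective), hYcard]
    · show ((j : ℤ) + 2 - u) ∈ T (Y.image (fun x => x - ((j : ℤ) + 2 - u)))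
      rw [hT, Finset.mem_filter]
      refine ⟨?_, ?_⟩
      · rw [Finset.mem_Icc]
        omega
      · intro x hx
        rw [Finset.mem_image] at hx
        obtain ⟨y, hy, rfl⟩ := hx
        have := hYsub hy
        rw [Finset.mem_inter] at this
        simpa using this.1
  · rintro ⟨j1, Y1⟩ hp1 ⟨j2, Y2⟩ hp2 heq
    simp only [Sigma.mk.inj_iff] at heq
    obtain ⟨h1, h2⟩ := heq
    have hj : j1 = j2 := by
      have : (j1 : ℤ) + 2 - u = (j2 : ℤ) + 2 - u := eq_of_heq h2
      omega
    subst hj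
    have hY : Y1 = Y2 := by
      have hinj : Function.Injective (fun x : ℤ => x - ((j1 : ℤ) + 2 - u)) := sub_left_injective
      exact Finset.image_injective hinj h1
    simp [hY]

lemma window_card_sum (n u : ℕ) (hn : 0 < n) (hu : 0 < u) (A : Finset ℤ)
    (hA1 : (A : Set ℤ) ⊆ Set.Icc 1 (n : ℤ)) :
    u * A.card ≤ ∑ j ∈ Finset.range (n + u - 1), (A ∩ Wnd u j).card := by
  classical
  have key : ∀ a ∈ A, u ≤ ((Finset.range (n + u - 1)).filter (fun j => a ∈ Wnd u j)).card := by
    intro a ha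
    have haI : (1 : ℤ) ≤ a ∧ a ≤ n := by
      have := hA1 (Finset.mem_coe.mpr ha); rwa [Set.mem_Icc] at this
    set t : ℕ := (a - 1).toNat with ht
    have hta : (t : ℤ) = a - 1 := by omega
    have hsub : Finset.Ico t (t + u) ⊆
        (Finset.range (n + u - 1)).filter (fun j => a ∈ Wnd u j) := by
      intro j hj
      rw [Finset.mem_Ico] at hj
      rw [Finset.mem_filter, Finset.mem_range]
      constructor
      · omega
      · rw [Wnd, Finset.mem_Icc]
        have h1 : (t : ℤ) ≤ j := by exact_mod_cast hj.1
        have h2 : (j : ℤ) < t + u := by exact_mod_cast hj.2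
        omega
    calc u = (Finset.Ico t (t + u)).card := by rw [Nat.card_Ico]; omega
      _ ≤ _ := Finset.card_le_card hsub
  calc u * A.card = ∑ a ∈ A, u := by rw [Finset.sum_const, smul_eq_mul, mul_comm]
    _ ≤ ∑ a ∈ A, ((Finset.range (n + u - 1)).filter (fun j => a ∈ Wnd u j)).card :=
        Finset.sum_le_sum key
    _ = ∑ j ∈ Finset.range (n + u - 1), (A ∩ Wnd u j).card := by
        simp only [Finset.card_filter]
        rw [Finset.sum_comm]
        congr 1
        ext j
        rw [← Finset.filter_mem_eq_inter, Finset.card_filter]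

lemma analytic (g h N u M : ℕ) (hh : 2 ≤ h) (hg : 2 ≤ g) (hN : 0 < N) (c : ℕ → ℕ)
    (H1 : ∑ j ∈ Finset.range N, (c j).choose h ≤ (g - 1) * u.choose h)
    (H2 : u * M ≤ ∑ j ∈ Finset.range N, c j) :
    (u : ℝ) * M ≤ ((h : ℝ) - 1) * N
      + ((g : ℝ) - 1) ^ ((1 : ℝ) / h) * (N : ℝ) ^ (1 - (1 : ℝ) / h) * u := by
  have hh0 : (h : ℝ) ≠ 0 := by positivity
  have hg1 : (1 : ℝ) ≤ (g : ℝ) - 1 := by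
    have : (2 : ℝ) ≤ g := by exact_mod_cast hg
    linarith
  set x : ℕ → ℝ := fun j => ((c j + 1 - h : ℕ) : ℝ) with hx
  have hx0 : ∀ j ∈ Finset.range N, 0 ≤ x j := fun j _ => Nat.cast_nonneg _
  set S : ℝ := ∑ j ∈ Finset.range N, x j with hS
  have hS0 : 0 ≤ S := Finset.sum_nonneg hx0
  -- step b (ℕ)
  have stepb : ∑ j ∈ Finset.range N, (c j + 1 - h) ^ h ≤ (g - 1) * u ^ h := by
    calc ∑ j ∈ Finset.range N, (c j + 1 - h) ^ h
        ≤ ∑ j ∈ Finset.range N, (c j).descFactorial h :=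
          Finset.sum_le_sum (fun j _ => (c j).pow_sub_le_descFactorial h)
      _ = ∑ j ∈ Finset.range N, Nat.factorial h * (c j).choose h := by
          simp [Nat.descFactorial_eq_factorial_mul_choose]
      _ = Nat.factorial h * ∑ j ∈ Finset.range N, (c j).choose h := by rw [Finset.mul_sum]
      _ ≤ Nat.factorial h * ((g - 1) * u.choose h) := Nat.mul_le_mul_left _ H1
      _ = (g - 1) * (Nat.factorial h * u.choose h) := by ring
      _ = (g - 1) * u.descFactorial h := by rw [Nat.descFactorial_eq_factorial_mul_choose]
      _ ≤ (g - 1) * u ^ h := Nat.mul_le_mul_left _ (u.descFactorial_le_pow h)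
  -- step a
  have stepa : S ^ h ≤ (N : ℝ) ^ (h - 1) * (((g : ℝ) - 1) * (u : ℝ) ^ h) := by
    have hpm := pow_sum_div_card_le_sum_pow hx0 (h - 1)
    rw [Finset.card_range] at hpm
    have hrw : h - 1 + 1 = h := by omega
    rw [hrw] at hpm
    have hNpos : (0 : ℝ) < (N : ℝ) ^ (h - 1) := by positivity
    have h1 : S ^ h ≤ (N : ℝ) ^ (h - 1) * ∑ j ∈ Finset.range N, x j ^ h := by
      rw [hS]
      calc (∑ j ∈ Finset.range N, x j) ^ h
          = ((∑ j ∈ Finset.range N, x j) ^ h / (N : ℝ) ^ (h - 1)) * (N : ℝ) ^ (h - 1) := by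
            field_simp
        _ ≤ (∑ j ∈ Finset.range N, x j ^ h) * (N : ℝ) ^ (h - 1) :=
            mul_le_mul_of_nonneg_right hpm (le_of_lt hNpos)
        _ = (N : ℝ) ^ (h - 1) * ∑ j ∈ Finset.range N, x j ^ h := by ring
    refine h1.trans (mul_le_mul_of_nonneg_left ?_ (le_of_lt hNpos))
    have : ∑ j ∈ Finset.range N, x j ^ h = ((∑ j ∈ Finset.range N, (c j + 1 - h) ^ h : ℕ) : ℝ) := by
      push_cast [hx]
      rfl
    rw [this]
    calc ((∑ j ∈ Finset.range N, (c j + 1 - h) ^ h : ℕ) : ℝ)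
        ≤ (((g - 1) * u ^ h : ℕ) : ℝ) := by exact_mod_cast stepb
      _ = ((g : ℝ) - 1) * (u : ℝ) ^ h := by
          push_cast
          rw [Nat.cast_sub (by omega : 1 ≤ g)]
          push_cast
          ring
  -- step c
  have stepc : (u : ℝ) * M - ((h : ℝ) - 1) * N ≤ S := by
    have pointwise : ∀ j ∈ Finset.range N, ((c j : ℝ) + 1 - h) ≤ x j := by
      intro j _
      rcases le_total h (c j + 1) with hc | hc
      · rw [hx]
        have : ((c j + 1 - h : ℕ) : ℝ) = (c j : ℝ) + 1 - h := by
          rw [Nat.cast_sub hc]; push_cast; ring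
        exact le_of_eq this.symm
      · have h1 : (c j : ℝ) + 1 - h ≤ 0 := by
          have : (c j : ℝ) + 1 ≤ h := by exact_mod_cast hc
          linarith
        exact h1.trans (Nat.cast_nonneg _)
    calc (u : ℝ) * M - ((h : ℝ) - 1) * N
        = (u * M : ℕ) + N * (1 - (h : ℝ)) := by push_cast; ring
      _ ≤ ((∑ j ∈ Finset.range N, c j : ℕ) : ℝ) + N * (1 - (h : ℝ)) := by
          have : ((u * M : ℕ) : ℝ) ≤ ((∑ j ∈ Finset.range N, c j : ℕ) : ℝ) := by
            exact_mod_cast H2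
          linarith
      _ = ∑ j ∈ Finset.range N, ((c j : ℝ) + 1 - h) := by
          rw [Finset.sum_sub_distrib, Finset.sum_add_distrib, Finset.sum_const,
            Finset.sum_const, Finset.card_range]
          push_cast
          ring
      _ ≤ S := Finset.sum_le_sum pointwise
  -- step d
  set B : ℝ := ((g : ℝ) - 1) ^ ((1 : ℝ) / h) * (N : ℝ) ^ (1 - (1 : ℝ) / h) * u with hB
  have hB0 : 0 ≤ B := by
    apply mul_nonneg (mul_nonneg _ _) (Nat.cast_nonneg _)
    · exact Real.rpow_nonneg (by linarith) _
    · exact Real.rpow_nonneg (Nat.cast_nonneg _) _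
  have hBpow : B ^ h = (N : ℝ) ^ (h - 1) * (((g : ℝ) - 1) * (u : ℝ) ^ h) := by
    rw [hB, mul_pow, mul_pow]
    rw [← Real.rpow_natCast (((g : ℝ) - 1) ^ ((1 : ℝ) / h)) h,
        ← Real.rpow_natCast ((N : ℝ) ^ (1 - (1 : ℝ) / h)) h,
        ← Real.rpow_mul (by linarith), ← Real.rpow_mul (Nat.cast_nonneg _)]
    have e1 : (1 : ℝ) / h * h = 1 := by field_simp
    have e2 : (1 - (1 : ℝ) / h) * h = ((h - 1 : ℕ) : ℝ) := by
      rw [Nat.cast_sub (by omega : 1 ≤ h)]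
      field_simp
      norm_num
    rw [e1, e2, Real.rpow_one, Real.rpow_natCast]
    ring
  have hfinal : (u : ℝ) * M - ((h : ℝ) - 1) * N ≤ B := by
    rcases le_or_gt ((u : ℝ) * M - ((h : ℝ) - 1) * N) 0 with hle | hlt
    · exact hle.trans hB0
    · have hSB : S ^ h ≤ B ^ h := by rw [hBpow]; exact stepa
      have : S ≤ B := le_of_pow_le_pow_left₀ (by omega) hB0 hSB
      linarith
  linarith

lemma concave_bound (x y α : ℝ) (hx : 1 ≤ x) (hy : 0 ≤ y) (hα0 : 0 ≤ α) (hα1 : α ≤ 1) :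
    (x + y) ^ α ≤ x ^ α + y * x ^ (α - 1) := by
  have hx0 : (0 : ℝ) < x := lt_of_lt_of_le one_pos hx
  have h1 : x + y = x * (1 + y / x) := by field_simp
  have hbase : (1 : ℝ) ≤ 1 + y / x := by
    have : 0 ≤ y / x := div_nonneg hy hx0.le
    linarith
  rw [h1, Real.mul_rpow hx0.le (by linarith)]
  have h2 : (1 + y / x) ^ α ≤ 1 + y / x := by
    calc (1 + y / x) ^ α ≤ (1 + y / x) ^ (1 : ℝ) :=
          Real.rpow_le_rpow_of_exponent_le hbase hα1
      _ = 1 + y / x := Real.rpow_one _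
  calc x ^ α * (1 + y / x) ^ α ≤ x ^ α * (1 + y / x) :=
        mul_le_mul_of_nonneg_left h2 (Real.rpow_nonneg hx0.le _)
    _ = x ^ α + y * x ^ (α - 1) := by
        rw [Real.rpow_sub hx0, Real.rpow_one]
        field_simp

lemma main_key (g h n u : ℕ) (hh : 2 ≤ h) (hgh : h ≤ g) (hn : 0 < n) (hu : 0 < u)
    (A : Finset ℤ) (hA1 : (A : Set ℤ) ⊆ Set.Icc 1 (n : ℤ)) (hA2 : IsChSet h g (A : Set ℤ)) :
    (u : ℝ) * A.card ≤ ((h : ℝ) - 1) * ((n + u - 1 : ℕ) : ℝ)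
      + ((g : ℝ) - 1) ^ ((1 : ℝ) / h) * (((n + u - 1 : ℕ) : ℝ)) ^ (1 - (1 : ℝ) / h) * u :=
  analytic g h (n + u - 1) u A.card hh (hh.trans hgh) (by omega)
    (fun j => (A ∩ Wnd u j).card)
    (window_choose_sum g h n u (hh.trans hgh) hu A hA1 hA2 hh)
    (window_card_sum n u hn hu A hA1)

theorem stmt2 (g h : ℕ) (hh : 2 ≤ h) (hgh : h ≤ g) :
    ∃ C : ℝ, 0 < C ∧ ∀ n : ℕ, 0 < n → ∀ A : Finset ℤ,
      (A : Set ℤ) ⊆ Set.Icc 1 (n : ℤ) → IsChSet h g (A : Set ℤ) →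
      (A.card : ℝ) ≤ ((g : ℝ) - 1) ^ ((1 : ℝ) / h) * (n : ℝ) ^ (1 - (1 : ℝ) / h)
        + C * (n : ℝ) ^ ((1 : ℝ) / 2 - 1 / (2 * h)) := by
  refine ⟨2 * h + 2 * g, by positivity, ?_⟩
  intro n hn A hA1 hA2
  have hhR : (2 : ℝ) ≤ (h : ℝ) := by exact_mod_cast hh
  have hgR : (2 : ℝ) ≤ (g : ℝ) := by exact_mod_cast hh.trans hgh
  have hh0 : (h : ℝ) ≠ 0 := by positivity
  set p : ℝ := 1 / 2 + 1 / (2 * h) with hp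
  set e : ℝ := (1 : ℝ) / 2 - 1 / (2 * h) with he
  set α : ℝ := 1 - (1 : ℝ) / h with hα
  have hh2 : (1 : ℝ) / h ≤ 1 / 2 := by
    apply one_div_le_one_div_of_le <;> linarith
  have hh2' : (1 : ℝ) / (2 * h) ≤ 1 / 2 := by
    apply one_div_le_one_div_of_le <;> linarith
  have hhpos : (0 : ℝ) < 1 / h := by positivity
  have hα0 : 0 ≤ α := by rw [hα]; linarith
  have hα1 : α ≤ 1 := by rw [hα]; linarith
  have h2hpos : (0 : ℝ) < 1 / (2 * (h : ℝ)) := by positivity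
  have he0 : 0 ≤ e := by rw [he]; linarith
  have hp0 : 0 ≤ p := by rw [hp]; linarith
  have hp1 : p ≤ 1 := by rw [hp]; linarith
  have hn1 : (1 : ℝ) ≤ (n : ℝ) := by exact_mod_cast hn
  have hn0 : (0 : ℝ) < (n : ℝ) := by linarith
  set u : ℕ := ⌈(n : ℝ) ^ p⌉₊ with hu
  have hnp0 : (0 : ℝ) < (n : ℝ) ^ p := Real.rpow_pos_of_pos hn0 _
  have hnp1 : (1 : ℝ) ≤ (n : ℝ) ^ p := Real.one_le_rpow hn1 hp0
  have hu1 : ((n : ℝ) ^ p) ≤ u := Nat.le_ceil _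
  have huR1 : (1 : ℝ) ≤ (u : ℝ) := hnp1.trans hu1
  have hu0 : 0 < u := by
    have : (1 : ℕ) ≤ u := by exact_mod_cast huR1
    omega
  have huR0 : (0 : ℝ) ≤ (u : ℝ) := by linarith
  have hu2 : (u : ℝ) ≤ 2 * (n : ℝ) ^ p := by
    have := Nat.ceil_lt_add_one hnp0.le
    rw [← hu] at this
    linarith
  set N : ℕ := n + u - 1 with hN
  have hNR : ((N : ℕ) : ℝ) ≤ (n : ℝ) + u := by
    have h1 : (N : ℕ) ≤ n + u := by omega
    calc ((N : ℕ) : ℝ) ≤ ((n + u : ℕ) : ℝ) := by exact_mod_cast h1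
      _ = (n : ℝ) + u := by push_cast; ring
  set G : ℝ := ((g : ℝ) - 1) ^ ((1 : ℝ) / h) with hG
  have hg1R : (1 : ℝ) ≤ (g : ℝ) - 1 := by linarith
  have hG0 : (0 : ℝ) ≤ G := Real.rpow_nonneg (by linarith) _
  have hGg : G ≤ (g : ℝ) := by
    rw [hG]
    calc ((g : ℝ) - 1) ^ ((1 : ℝ) / h) ≤ ((g : ℝ) - 1) ^ (1 : ℝ) :=
          Real.rpow_le_rpow_of_exponent_le hg1R (by linarith)
      _ = (g : ℝ) - 1 := Real.rpow_one _
      _ ≤ (g : ℝ) := by linarith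
  have hpe : p + e = 1 := by rw [hp, he]; ring
  have id1 : (n : ℝ) ^ p * (n : ℝ) ^ e = (n : ℝ) := by
    rw [← Real.rpow_add hn0, hpe, Real.rpow_one]
  have id2 : (n : ℝ) ^ p * (n : ℝ) ^ (α - 1) = (n : ℝ) ^ e := by
    rw [← Real.rpow_add hn0]
    congr 1
    rw [hp, hα, he]
    field_simp
    ring
  have ne1 : (1 : ℝ) ≤ (n : ℝ) ^ e := Real.one_le_rpow hn1 he0
  have ne0 : (0 : ℝ) ≤ (n : ℝ) ^ e := by linarith
  have nα0 : (0 : ℝ) ≤ (n : ℝ) ^ α := Real.rpow_nonneg hn0.le _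
  have nα10 : (0 : ℝ) ≤ (n : ℝ) ^ (α - 1) := Real.rpow_nonneg hn0.le _
  have key := main_key g h n u hh hgh hn hu0 A hA1 hA2
  rw [← hN, ← hG, ← hα] at key
  -- intermediate bounds
  have step1 : ((N : ℕ) : ℝ) ^ α ≤ ((n : ℝ) + u) ^ α :=
    Real.rpow_le_rpow (Nat.cast_nonneg _) hNR hα0
  have step2 : ((n : ℝ) + u) ^ α ≤ (n : ℝ) ^ α + u * (n : ℝ) ^ (α - 1) :=
    concave_bound (n : ℝ) (u : ℝ) α hn1 huR0 hα0 hα1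
  have step3 : (u : ℝ) * (n : ℝ) ^ (α - 1) ≤ 2 * (n : ℝ) ^ e := by
    calc (u : ℝ) * (n : ℝ) ^ (α - 1) ≤ (2 * (n : ℝ) ^ p) * (n : ℝ) ^ (α - 1) :=
          mul_le_mul_of_nonneg_right hu2 nα10
      _ = 2 * (n : ℝ) ^ e := by rw [mul_assoc, id2]
  have step4 : (n : ℝ) ≤ u * (n : ℝ) ^ e := by
    calc (n : ℝ) = (n : ℝ) ^ p * (n : ℝ) ^ e := id1.symm
      _ ≤ u * (n : ℝ) ^ e := mul_le_mul_of_nonneg_right hu1 ne0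
  have step5 : (u : ℝ) ≤ u * (n : ℝ) ^ e := le_mul_of_one_le_right huR0 ne1
  have hcoef : 2 * ((h : ℝ) - 1) + 2 * G ≤ 2 * h + 2 * g := by linarith
  -- combine
  have main2 : (u : ℝ) * A.card ≤
      (u : ℝ) * (G * (n : ℝ) ^ α + (2 * (h : ℝ) + 2 * g) * (n : ℝ) ^ e) := by
    have t1 : ((h : ℝ) - 1) * ((N : ℕ) : ℝ) ≤ ((h : ℝ) - 1) * ((n : ℝ) + u) :=
      mul_le_mul_of_nonneg_left hNR (by linarith)
    have t2 : G * ((N : ℕ) : ℝ) ^ α * u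
        ≤ G * ((n : ℝ) ^ α + u * (n : ℝ) ^ (α - 1)) * u :=
      mul_le_mul_of_nonneg_right
        (mul_le_mul_of_nonneg_left (step1.trans step2) hG0) huR0
    have t3 : G * ((n : ℝ) ^ α + u * (n : ℝ) ^ (α - 1)) * u
        ≤ G * (n : ℝ) ^ α * u + G * (2 * (n : ℝ) ^ e) * u := by
      have := mul_le_mul_of_nonneg_right
        (mul_le_mul_of_nonneg_left step3 hG0) huR0
      nlinarith [this]
    have t4 : ((h : ℝ) - 1) * ((n : ℝ) + u)
        ≤ ((h : ℝ) - 1) * (u * (n : ℝ) ^ e) + ((h : ℝ) - 1) * (u * (n : ℝ) ^ e) := by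
      have hb : (0 : ℝ) ≤ (h : ℝ) - 1 := by linarith
      have := mul_le_mul_of_nonneg_left step4 hb
      have := mul_le_mul_of_nonneg_left step5 hb
      nlinarith [mul_le_mul_of_nonneg_left step4 hb, mul_le_mul_of_nonneg_left step5 hb]
    have expand : ((h : ℝ) - 1) * (u * (n : ℝ) ^ e) + ((h : ℝ) - 1) * (u * (n : ℝ) ^ e)
        + (G * (n : ℝ) ^ α * u + G * (2 * (n : ℝ) ^ e) * u)
        = (u : ℝ) * (G * (n : ℝ) ^ α + (2 * ((h : ℝ) - 1) + 2 * G) * (n : ℝ) ^ e) := by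
      ring
    have last : (u : ℝ) * (G * (n : ℝ) ^ α + (2 * ((h : ℝ) - 1) + 2 * G) * (n : ℝ) ^ e)
        ≤ (u : ℝ) * (G * (n : ℝ) ^ α + (2 * (h : ℝ) + 2 * g) * (n : ℝ) ^ e) := by
      apply mul_le_mul_of_nonneg_left _ huR0
      have := mul_le_mul_of_nonneg_right hcoef ne0
      linarith
    linarith
  have hufin : (0 : ℝ) < (u : ℝ) := by linarith
  have := le_of_mul_le_mul_left main2 hufin
  rw [hG, hα, he] at this
  exact this
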